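/- Let θ* ∈ Θ and let (q_n) ⊆ Γ be a sequence of contaminating distributions satisfying: (a) Σ_{k=0}^∞ min{p_k(θ*), q_{n,k}} → 0 as n → ∞; (b) for every c > 0, sup_{θ ∈ Θ, |θ| ≤ c} Σ_{k=0}^∞ min{p_k(θ), q_{n,k}} → 0 as n → ∞; (c) for every sequence (θ_n) ⊆ Θ with |θ_n| → ∞, Σ_{k=0}^∞ min{p_k(θ*), p_k(θ_n)} → 0; and (d) G(−1) is finite and lim_{t→∞} G(t)/t exists and is finite. Then for every α ∈ (0,1/2), if for each n, θ_n is a global minimizer over Θ of θ ↦ ρ((1−α)p(θ*) + α q_n, θ), the sequence (|θ_n|) does not tend to infinity. (That is, the asymptotic breakdown point of the minimum disparity estimator at the model p(θ*) is at least 1/2.) -/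

import Mathlib

open Filter Topology

/-- `q` is a probability distribution on the nonnegative integers. -/
def IsDistrib (q : ℕ → ℝ) : Prop := (∀ k, 0 ≤ q k) ∧ HasSum q 1

/-- The disparity measure `ρ(q,θ) = Σ_k G(q_k/p_k(θ) - 1) · p_k(θ)`. -/
noncomputable def disparity (G : ℝ → ℝ) (p : ℝ → ℕ → ℝ) (q : ℕ → ℝ) (θ : ℝ) : ℝ :=
  ∑' k, G (q k / p θ k - 1) * p θ k


open Filter Topology Set

open Filter Topology Set

/-- Tangent line of a convex function is a global lower bound. -/
lemma tangent_le {G : ℝ → ℝ} (hG : ConvexOn ℝ (Set.Ici (-1:ℝ)) G) {u d : ℝ} (hu : -1 ≤ u)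
    (hd : HasDerivWithinAt G d (Set.Ici (-1:ℝ)) u) {t : ℝ} (ht : -1 ≤ t) :
    G u + d * (t - u) ≤ G t := by
  rcases lt_trichotomy t u with h | h | h
  · have h2 := hG.slope_le_of_hasDerivWithinAt ht hu h hd
    rw [slope_def_field] at h2
    have hut : 0 < u - t := by linarith
    rw [div_le_iff₀ hut] at h2
    nlinarith
  · simp [h]
  · have h2 := hG.le_slope_of_hasDerivWithinAt hu ht h hd
    rw [slope_def_field] at h2
    have hut : 0 < t - u := by linarith
    rw [le_div_iff₀ hut] at h2
    nlinarith

/-- Chord of a convex function is an upper bound on the chord interval. -/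
lemma chord_upper {G : ℝ → ℝ} (hG : ConvexOn ℝ (Set.Ici (-1:ℝ)) G) {a b : ℝ} (ha : -1 ≤ a)
    (hab : a < b) {t : ℝ} (h1 : a ≤ t) (h2 : t ≤ b) :
    G t ≤ G a + (G b - G a) / (b - a) * (t - a) := by
  have hb : -1 ≤ b := le_trans ha hab.le
  have hba : (0:ℝ) < b - a := by linarith
  rcases eq_or_lt_of_le h1 with rfl | h1'
  · simp
  rcases eq_or_lt_of_le h2 with rfl | h2'
  · rw [div_mul_cancel₀ _ (by linarith : t - a ≠ 0)]
    ring_nf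
    exact le_refl _
  have key := hG.secant_mono (a := a) (x := t) (y := b) ha (le_trans ha h1) hb
    (by linarith) (by linarith) h2
  rw [div_le_div_iff₀ (by linarith) hba] at key
  rw [← sub_le_iff_le_add', div_mul_eq_mul_div, le_div_iff₀ hba]
  nlinarith

/-- Chord extended to the left of the chord interval is a lower bound. -/
lemma chord_lower {G : ℝ → ℝ} (hG : ConvexOn ℝ (Set.Ici (-1:ℝ)) G) {a b : ℝ}
    (hab : a < b) (hb : -1 ≤ b) {t : ℝ} (h1 : -1 ≤ t) (h2 : t ≤ a) :
    G a + (G b - G a) / (b - a) * (t - a) ≤ G t := by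
  rcases eq_or_lt_of_le h2 with rfl | h2'
  · simp
  have ha : -1 ≤ a := le_trans h1 h2
  have key := hG.secant_mono (a := a) (x := t) (y := b) ha h1 hb
    (by linarith) (by linarith) (by linarith)
  rw [div_le_iff_of_neg (by linarith : t - a < 0)] at key
  linarith
open Filter Topology Set

/-- A convex function with `G 0 = 0` and `G t / t → L` satisfies `G t ≤ L t` for `t ≥ 0`. -/
lemma le_linear_of_tendsto {G : ℝ → ℝ} (hG : ConvexOn ℝ (Set.Ici (-1:ℝ)) G) (hG0 : G 0 = 0)
    {L : ℝ} (hL : Tendsto (fun t => G t / t) atTop (𝓝 L)) {t : ℝ} (ht : 0 ≤ t) :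
    G t ≤ L * t := by
  rcases eq_or_lt_of_le ht with rfl | ht'
  · simp [hG0]
  have key : G t / t ≤ L := by
    refine ge_of_tendsto hL ?_
    filter_upwards [eventually_ge_atTop (t + 1)] with s hs
    have hst : t < s := by linarith
    have := hG.secant_mono (a := 0) (x := t) (y := s) (by norm_num) (by simp; linarith)
      (by simp; linarith) (by linarith) (by linarith) hst.le
    simpa [hG0] using this
  rw [div_le_iff₀ ht'] at key
  linarith [key]

lemma summable_ite {f : ℕ → ℝ} (hf : Summable f) (h0 : ∀ k, 0 ≤ f k) (P : ℕ → Prop)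
    [DecidablePred P] : Summable (fun k => if P k then f k else 0) := by
  refine hf.of_nonneg_of_le (fun k => ?_) (fun k => ?_)
  · split <;> simp [h0]
  · split <;> simp [h0]

lemma tsum_ite_le {f g : ℕ → ℝ} (hg : Summable g) (h0 : ∀ k, 0 ≤ g k)
    (P : ℕ → Prop) [DecidablePred P] (h : ∀ k, P k → f k ≤ g k) (h0f : ∀ k, 0 ≤ f k) :
    ∑' k, (if P k then f k else 0) ≤ ∑' k, g k := by
  have hs : Summable (fun k => if P k then f k else 0) := by
    refine hg.of_nonneg_of_le (fun k => ?_) (fun k => ?_)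
    · split <;> simp [h0f]
    · split
      · exact h _ ‹_›
      · exact h0 _
  exact Summable.tsum_le_tsum (fun k => by split; exacts [h _ ‹_›, h0 _]) hs hg

/-- Summability of the disparity series, given a linear bound on `|G|`. -/
lemma summable_disparity {G : ℝ → ℝ} {c₁ c₂ : ℝ}
    (hB : ∀ t, -1 ≤ t → |G t| ≤ c₁ + c₂ * (t + 1))
    {h m : ℕ → ℝ} (hh0 : ∀ k, 0 ≤ h k) (hm : ∀ k, 0 < m k)
    (hhs : Summable h) (hms : Summable m) :
    Summable (fun k => G (h k / m k - 1) * m k) := by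
  refine Summable.of_norm_bounded (g := fun k => c₁ * m k + c₂ * h k)
    (((hms.mul_left c₁)).add (hhs.mul_left c₂)) (fun k => ?_)
  have hmk := hm k
  have ht : -1 ≤ h k / m k - 1 := by
    have : 0 ≤ h k / m k := div_nonneg (hh0 k) hmk.le
    linarith
  have hb := hB _ ht
  have : |G (h k / m k - 1) * m k| ≤ (c₁ + c₂ * (h k / m k - 1 + 1)) * m k := by
    rw [abs_mul, abs_of_pos hmk]
    exact mul_le_mul_of_nonneg_right hb hmk.le
  rw [Real.norm_eq_abs]
  refine le_trans this (le_of_eq ?_)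
  field_simp
  ring

open Filter Topology Set

lemma upper_bound {G : ℝ → ℝ} {L α K : ℝ} (hα0 : 0 < α)
    (hGle : ∀ t, 0 ≤ t → G t ≤ L * t)
    (hchord : ∀ t, -α ≤ t → t ≤ 0 → G t ≤ G (-α) + K * (t + α))
    {ps q : ℕ → ℝ} (hps : ∀ k, 0 < ps k) (hps1 : HasSum ps 1)
    (hq0 : ∀ k, 0 ≤ q k) (hq1 : HasSum q 1)
    (hsum : Summable (fun k => G (((1 - α) * ps k + α * q k) / ps k - 1) * ps k)) :
    ∑' k, G (((1 - α) * ps k + α * q k) / ps k - 1) * ps k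
      ≤ G (-α) + α * L + (|G (-α)| + |K| * α + 2 * |L| * α) * (∑' k, min (ps k) (q k)) := by
  classical
  set γ := ∑' k, min (ps k) (q k) with hγdef
  have hmin0 : ∀ k, 0 ≤ min (ps k) (q k) := fun k => le_min (hps k).le (hq0 k)
  have hminsum : Summable (fun k => min (ps k) (q k)) :=
    hps1.summable.of_nonneg_of_le hmin0 (fun k => min_le_left _ _)
  have hγ0 : 0 ≤ γ := tsum_nonneg hmin0
  set P : ℕ → Prop := fun k => q k ≤ ps k with hPdef
  have SpP : Summable (fun k => if P k then ps k else 0) :=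
    summable_ite hps1.summable (fun k => (hps k).le) P
  have SqP : Summable (fun k => if P k then q k else 0) :=
    summable_ite hq1.summable hq0 P
  have SpN : Summable (fun k => if ¬ P k then ps k else 0) :=
    summable_ite hps1.summable (fun k => (hps k).le) _
  have SqN : Summable (fun k => if ¬ P k then q k else 0) :=
    summable_ite hq1.summable hq0 _
  set pS := ∑' k, (if P k then ps k else 0) with hpS
  set qS := ∑' k, (if P k then q k else 0) with hqS
  set pSc := ∑' k, (if ¬ P k then ps k else 0) with hpSc
  set qSc := ∑' k, (if ¬ P k then q k else 0) with hqSc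
  have hpS0 : 0 ≤ pS := tsum_nonneg (fun k => by split <;> simp [(hps k).le])
  have hqS0 : 0 ≤ qS := tsum_nonneg (fun k => by split <;> simp [hq0 k])
  have hpSc0 : 0 ≤ pSc := tsum_nonneg (fun k => by split <;> simp [(hps k).le])
  have hqSc0 : 0 ≤ qSc := tsum_nonneg (fun k => by split <;> simp [hq0 k])
  have hpsplit : pS + pSc = 1 := by
    have h1 : HasSum (fun k => (if P k then ps k else 0) + (if ¬ P k then ps k else 0))
        (pS + pSc) := SpP.hasSum.add SpN.hasSum
    have h2 : (fun k => (if P k then ps k else 0) + (if ¬ P k then ps k else 0)) = ps := by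
      funext k; by_cases h : P k <;> simp [h]
    rw [h2] at h1; exact h1.unique hps1
  have hqsplit : qS + qSc = 1 := by
    have h1 : HasSum (fun k => (if P k then q k else 0) + (if ¬ P k then q k else 0))
        (qS + qSc) := SqP.hasSum.add SqN.hasSum
    have h2 : (fun k => (if P k then q k else 0) + (if ¬ P k then q k else 0)) = q := by
      funext k; by_cases h : P k <;> simp [h]
    rw [h2] at h1; exact h1.unique hq1
  have hqS_le : qS ≤ γ := by
    refine Summable.tsum_le_tsum (fun k => ?_) SqP hminsum
    by_cases h : P k
    · simpa [h] using le_min h (le_refl _)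
    · simp [h, hmin0 k]
  have hpSc_le : pSc ≤ γ := by
    refine Summable.tsum_le_tsum (fun k => ?_) SpN hminsum
    by_cases h : P k
    · simp [h, hmin0 k]
    · have : ps k ≤ q k := le_of_not_ge h
      simpa [h] using le_min (le_refl _) this
  -- pointwise upper bound
  set g : ℕ → ℝ := fun k => if P k then G (-α) * ps k + (K * α) * q k
      else (L * α) * (q k - ps k) with hgdef
  have hpt : ∀ k, G (((1 - α) * ps k + α * q k) / ps k - 1) * ps k ≤ g k := by
    intro k
    have hpk := hps k
    have hteq : ((1 - α) * ps k + α * q k) / ps k - 1 = α * q k / ps k - α := by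
      field_simp
      ring
    by_cases h : P k
    · have ht1 : -α ≤ ((1 - α) * ps k + α * q k) / ps k - 1 := by
        rw [hteq]
        have : 0 ≤ α * q k / ps k := div_nonneg (mul_nonneg hα0.le (hq0 k)) hpk.le
        linarith
      have ht2 : ((1 - α) * ps k + α * q k) / ps k - 1 ≤ 0 := by
        rw [hteq]
        have : q k / ps k ≤ 1 := (div_le_one hpk).2 h
        have h2 : α * (q k / ps k) ≤ α * 1 := by
          exact mul_le_mul_of_nonneg_left this hα0.le
        rw [mul_div_assoc]
        linarith
      have hc := hchord _ ht1 ht2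
      have := mul_le_mul_of_nonneg_right hc hpk.le
      refine this.trans (le_of_eq ?_)
      simp only [hgdef, h, if_true]
      rw [hteq]
      field_simp
      ring
    · have hpq : ps k ≤ q k := le_of_not_ge h
      have ht0 : 0 ≤ ((1 - α) * ps k + α * q k) / ps k - 1 := by
        rw [hteq]
        have h1 : 1 ≤ q k / ps k := (one_le_div hpk).2 hpq
        have h2 : α * 1 ≤ α * (q k / ps k) := mul_le_mul_of_nonneg_left h1 hα0.le
        rw [mul_div_assoc]
        linarith
      have hc := hGle _ ht0
      have := mul_le_mul_of_nonneg_right hc hpk.le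
      refine this.trans (le_of_eq ?_)
      simp only [hgdef, h, if_false]
      rw [hteq]
      field_simp
  -- summability of g and its sum
  have hg_eq : g = fun k => G (-α) * (if P k then ps k else 0)
      + (K * α) * (if P k then q k else 0)
      + (L * α) * ((if ¬ P k then q k else 0) - (if ¬ P k then ps k else 0)) := by
    funext k; by_cases h : P k <;> simp [hgdef, h] <;> ring
  have hgHasSum : HasSum g (G (-α) * pS + (K * α) * qS + (L * α) * (qSc - pSc)) := by
    rw [hg_eq]
    exact ((SpP.hasSum.mul_left _).add (SqP.hasSum.mul_left _)).add
      ((SqN.hasSum.sub SpN.hasSum).mul_left _)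
  have hmain := Summable.tsum_le_tsum hpt hsum hgHasSum.summable
  rw [hgHasSum.tsum_eq] at hmain
  refine hmain.trans ?_
  -- scalar arithmetic
  have e1 : G (-α) * pS ≤ G (-α) + |G (-α)| * γ := by
    have h1 : -G (-α) * pSc ≤ |G (-α)| * pSc :=
      mul_le_mul_of_nonneg_right (neg_le_abs _) hpSc0
    have h2 : |G (-α)| * pSc ≤ |G (-α)| * γ :=
      mul_le_mul_of_nonneg_left hpSc_le (abs_nonneg _)
    have h3 : G (-α) * pS = G (-α) - G (-α) * pSc := by
      rw [show pS = 1 - pSc by linarith]; ring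
    linarith
  have e2 : (K * α) * qS ≤ |K| * α * γ := by
    have h1 : K * (α * qS) ≤ |K| * (α * qS) :=
      mul_le_mul_of_nonneg_right (le_abs_self _) (by positivity)
    have h2 : (|K| * α) * qS ≤ (|K| * α) * γ :=
      mul_le_mul_of_nonneg_left hqS_le (by positivity)
    nlinarith
  have e3 : (L * α) * (qSc - pSc) ≤ α * L + 2 * |L| * α * γ := by
    have hX1 : qSc - pSc ≤ 1 := by linarith [hqsplit, hqS0, hpSc0]
    have hX2 : 1 - 2 * γ ≤ qSc - pSc := by linarith [hqsplit, hqS_le, hpSc_le]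
    have h1 : -(L * α) * (1 - (qSc - pSc)) ≤ |L| * α * (1 - (qSc - pSc)) := by
      refine mul_le_mul_of_nonneg_right ?_ (by linarith)
      have := neg_le_abs L
      nlinarith [hα0.le]
    have h2 : |L| * α * (1 - (qSc - pSc)) ≤ |L| * α * (2 * γ) := by
      refine mul_le_mul_of_nonneg_left (by linarith) (by positivity)
    nlinarith
  nlinarith [e1, e2, e3]

open Filter Topology Set

set_option maxHeartbeats 1000000 in
lemma lower_bound {G : ℝ → ℝ} {α K c₁ d₁ : ℝ} (hα0 : 0 < α) (hα2 : α < 1/2)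
    (hG : ConvexOn ℝ (Set.Ici (-1:ℝ)) G) (hGdiff : DifferentiableOn ℝ G (Set.Ici (-1:ℝ)))
    (htan1 : ∀ t, -1 ≤ t → c₁ + d₁ * t ≤ G t)
    (hchordK : ∀ u, -1 ≤ u → u ≤ -α → G (-α) + K * (u + α) ≤ G u)
    (hKd : K ≤ d₁)
    {ps q m : ℕ → ℝ} (hps0 : ∀ k, 0 ≤ ps k) (hps1 : HasSum ps 1)
    (hq0 : ∀ k, 0 ≤ q k) (hq1 : HasSum q 1)
    (hm : ∀ k, 0 < m k) (hm1 : HasSum m 1)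
    (hδ : ∑' k, min (ps k) (m k) ≤ (1 - 2*α)/(2*(1-α)))
    (hsum : Summable (fun k => G (((1 - α) * ps k + α * q k) / m k - 1) * m k)) :
    G (-α) + (1-α) * d₁ - (1-2*α) * K
      - (|c₁| + |d₁| + |K - d₁| + |G (-α)| + |K|) * (∑' k, min (ps k) (m k))
      ≤ ∑' k, G (((1 - α) * ps k + α * q k) / m k - 1) * m k := by
  classical
  have hα1 : α < 1 := by linarith
  set δ := ∑' k, min (ps k) (m k) with hδdef
  have hmin0 : ∀ k, 0 ≤ min (ps k) (m k) := fun k => le_min (hps0 k) (hm k).le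
  have hminsum : Summable (fun k => min (ps k) (m k)) :=
    hps1.summable.of_nonneg_of_le hmin0 (fun k => min_le_left _ _)
  have hδ0 : 0 ≤ δ := tsum_nonneg hmin0
  have hδhalf : δ ≤ 1/2 := by
    refine hδ.trans ?_
    rw [div_le_div_iff₀ (by linarith) (by norm_num)]
    nlinarith
  -- the contaminated distribution
  set h : ℕ → ℝ := fun k => (1 - α) * ps k + α * q k with hhdef
  have hh0 : ∀ k, 0 ≤ h k := fun k => by
    have := hps0 k; have := hq0 k; simp only [hhdef]; nlinarith
  have hh1 : HasSum h 1 := by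
    have := (hps1.mul_left (1 - α)).add (hq1.mul_left α)
    have e : (1 - α) * 1 + α * 1 = (1:ℝ) := by ring
    rw [e] at this; exact this
  set P : ℕ → Prop := fun k => m k ≤ ps k with hPdef
  have SmA : Summable (fun k => if P k then m k else 0) :=
    summable_ite hm1.summable (fun k => (hm k).le) P
  have SmB : Summable (fun k => if ¬ P k then m k else 0) :=
    summable_ite hm1.summable (fun k => (hm k).le) _
  have ShA : Summable (fun k => if P k then h k else 0) :=
    summable_ite hh1.summable hh0 P
  have ShB : Summable (fun k => if ¬ P k then h k else 0) :=
    summable_ite hh1.summable hh0 _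
  set mA := ∑' k, (if P k then m k else 0) with hmA
  set mB := ∑' k, (if ¬ P k then m k else 0) with hmB
  set hA := ∑' k, (if P k then h k else 0) with hhA
  set hB := ∑' k, (if ¬ P k then h k else 0) with hhB
  have hmA0 : 0 ≤ mA := tsum_nonneg (fun k => by split <;> simp [(hm k).le])
  have hhB0 : 0 ≤ hB := tsum_nonneg (fun k => by split <;> simp [hh0 k])
  have hmsplit : mA + mB = 1 := by
    have h1 : HasSum (fun k => (if P k then m k else 0) + (if ¬ P k then m k else 0))
        (mA + mB) := SmA.hasSum.add SmB.hasSum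
    have h2 : (fun k => (if P k then m k else 0) + (if ¬ P k then m k else 0)) = m := by
      funext k; by_cases hk : P k <;> simp [hk]
    rw [h2] at h1; exact h1.unique hm1
  have hhsplit : hA + hB = 1 := by
    have h1 : HasSum (fun k => (if P k then h k else 0) + (if ¬ P k then h k else 0))
        (hA + hB) := ShA.hasSum.add ShB.hasSum
    have h2 : (fun k => (if P k then h k else 0) + (if ¬ P k then h k else 0)) = h := by
      funext k; by_cases hk : P k <;> simp [hk]
    rw [h2] at h1; exact h1.unique hh1
  have hmA_le : mA ≤ δ := by
    refine Summable.tsum_le_tsum (fun k => ?_) SmA hminsum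
    by_cases hk : P k
    · simpa [hk] using le_min hk (le_refl _)
    · simp [hk, hmin0 k]
  have hmB_pos : (0:ℝ) < mB := by linarith [hmA_le, hδhalf, hmsplit]
  -- hB ≤ (1-α) δ + α
  have hhB_le : hB ≤ (1 - α) * δ + α := by
    have key : ∀ k, (if ¬ P k then h k else 0) ≤ (1-α) * min (ps k) (m k) + α * q k := by
      intro k
      by_cases hk : P k
      · have := hmin0 k; have := hq0 k
        simp only [hk, not_true, if_false]
        nlinarith
      · have hpm : ps k ≤ m k := le_of_not_ge hk
        have : min (ps k) (m k) = ps k := min_eq_left hpm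
        simp only [hk, not_false_iff, if_true, this, hhdef]
        exact le_refl _
    have hS2 : Summable (fun k => (1-α) * min (ps k) (m k) + α * q k) :=
      (hminsum.mul_left _).add (hq1.summable.mul_left _)
    have h2 := Summable.tsum_le_tsum key ShB hS2
    rw [Summable.tsum_add (hminsum.mul_left _) (hq1.summable.mul_left _), tsum_mul_left,
      tsum_mul_left, hq1.tsum_eq, mul_one] at h2
    exact h2
  -- the normalized mean over B
  set u : ℝ := hB / mB - 1 with hudef
  have hu1 : -1 ≤ u := by
    have : 0 ≤ hB / mB := div_nonneg hhB0 hmB_pos.le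
    simp only [hudef]; linarith
  have huα : u ≤ -α := by
    have hnum : hB ≤ (1 - α) * mB := by
      have hmB_ge : 1 - δ ≤ mB := by linarith [hmA_le, hmsplit]
      have : (1-α) * δ + α ≤ (1-α) * (1 - δ) := by
        have h1 : 2*(1-α) * δ ≤ 1 - 2*α := by
          have h2 := mul_le_mul_of_nonneg_left hδ (by linarith : (0:ℝ) ≤ 2*(1-α))
          have h3 : 2*(1-α) * ((1 - 2*α)/(2*(1-α))) = 1 - 2*α :=
            by rw [mul_comm]; exact div_mul_cancel₀ _ (by nlinarith : (0:ℝ) < 2*(1-α)).ne'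
          linarith [h2, h3.le, h3.ge]
        nlinarith
      refine hhB_le.trans (this.trans ?_)
      exact mul_le_mul_of_nonneg_left hmB_ge (by linarith)
    have : hB / mB ≤ 1 - α := (div_le_iff₀ hmB_pos).2 (by linarith [hnum])
    simp only [hudef]; linarith
  set d₂ : ℝ := derivWithin G (Set.Ici (-1:ℝ)) u with hd₂def
  have htan2 : ∀ t, -1 ≤ t → G u + d₂ * (t - u) ≤ G t := fun t ht =>
    tangent_le hG hu1 ((hGdiff u hu1).hasDerivWithinAt) ht
  -- pointwise lower bound
  set f : ℕ → ℝ := fun k => if P k then c₁ * m k + d₁ * (h k - m k)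
      else G u * m k + d₂ * (h k - (1 + u) * m k) with hfdef
  have ht_mem : ∀ k, -1 ≤ h k / m k - 1 := by
    intro k
    have : 0 ≤ h k / m k := div_nonneg (hh0 k) (hm k).le
    linarith
  have hpt : ∀ k, f k ≤ G (h k / m k - 1) * m k := by
    intro k
    have hmk := hm k
    have hteq : (h k / m k - 1) * m k = h k - m k := by field_simp
    by_cases hk : P k
    · have := htan1 _ (ht_mem k)
      have h2 := mul_le_mul_of_nonneg_right this hmk.le
      refine le_trans (le_of_eq ?_) h2
      simp only [hfdef, hk, if_true]
      rw [show (c₁ + d₁ * (h k / m k - 1)) * m k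
        = c₁ * m k + d₁ * ((h k / m k - 1) * m k) by ring, hteq]
    · have := htan2 _ (ht_mem k)
      have h2 := mul_le_mul_of_nonneg_right this hmk.le
      refine le_trans (le_of_eq ?_) h2
      simp only [hfdef, hk, if_false]
      rw [show (G u + d₂ * (h k / m k - 1 - u)) * m k
        = G u * m k + d₂ * ((h k / m k - 1) * m k - u * m k) by ring, hteq]
      ring
  -- summability of f and its sum
  have hf_eq : f = fun k => (c₁ * (if P k then m k else 0)
      + d₁ * ((if P k then h k else 0) - (if P k then m k else 0)))
      + (G u * (if ¬ P k then m k else 0)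
      + d₂ * ((if ¬ P k then h k else 0) - (1 + u) * (if ¬ P k then m k else 0))) := by
    funext k; by_cases hk : P k <;> simp [hfdef, hk] <;> ring
  have hfHasSum : HasSum f ((c₁ * mA + d₁ * (hA - mA))
      + (G u * mB + d₂ * (hB - (1 + u) * mB))) := by
    rw [hf_eq]
    exact (((SmA.hasSum.mul_left _)).add ((ShA.hasSum.sub SmA.hasSum).mul_left _)).add
      (((SmB.hasSum.mul_left _)).add ((ShB.hasSum.sub (SmB.hasSum.mul_left _)).mul_left _))
  have hmain := Summable.tsum_le_tsum hpt hfHasSum.summable hsum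
  rw [hfHasSum.tsum_eq] at hmain
  -- the d₂ term vanishes
  have hzero : hB - (1 + u) * mB = 0 := by
    rw [hudef]
    rw [show 1 + (hB / mB - 1) = hB / mB by ring, div_mul_cancel₀ _ hmB_pos.ne']
    ring
  rw [hzero, mul_zero, add_zero] at hmain
  -- chord bound on G u
  have hGu : G (-α) * mB + K * (hB - (1-α) * mB) ≤ G u * mB := by
    have := mul_le_mul_of_nonneg_right (hchordK u hu1 huα) hmB_pos.le
    refine le_trans (le_of_eq ?_) this
    have : (u + α) * mB = hB - (1-α) * mB := by
      rw [hudef]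
      rw [show (hB / mB - 1 + α) * mB = hB / mB * mB - (1 - α) * mB by ring,
        div_mul_cancel₀ _ hmB_pos.ne']
    rw [show (G (-α) + K * (u + α)) * mB = G (-α) * mB + K * ((u + α) * mB) by ring, this]
  -- final arithmetic
  have hhA_eq : hA = 1 - hB := by linarith [hhsplit]
  have hmB_eq : mB = 1 - mA := by linarith [hmsplit]
  clear_value δ u d₂ mA mB hA hB
  have e1 : c₁ * mA ≥ -(|c₁| * δ) := by
    have h1 : -|c₁| * mA ≤ c₁ * mA := mul_le_mul_of_nonneg_right (neg_abs_le _) hmA0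
    have h2 : |c₁| * mA ≤ |c₁| * δ := mul_le_mul_of_nonneg_left hmA_le (abs_nonneg _)
    linarith
  have e2 : -(d₁ * mA) ≥ -(|d₁| * δ) := by
    have h1 : d₁ * mA ≤ |d₁| * mA := mul_le_mul_of_nonneg_right (le_abs_self _) hmA0
    have h2 : |d₁| * mA ≤ |d₁| * δ := mul_le_mul_of_nonneg_left hmA_le (abs_nonneg _)
    linarith
  have e3 : (K - d₁) * hB ≥ α * (K - d₁) - |K - d₁| * δ := by
    have h1 : (K - d₁) * hB ≥ (K - d₁) * ((1-α) * δ + α) := by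
      rcases le_or_gt (K - d₁) 0 with hle | hlt
      · exact mul_le_mul_of_nonpos_left hhB_le hle
      · linarith [hKd]
    have ha : -(|K - d₁|) ≤ K - d₁ := neg_abs_le _
    have hb : (0:ℝ) ≤ (1-α) * δ := mul_nonneg (by linarith) hδ0
    have h2 : -(|K - d₁|) * ((1-α) * δ) ≤ (K - d₁) * ((1-α) * δ) :=
      mul_le_mul_of_nonneg_right ha hb
    have h3 : |K - d₁| * ((1-α) * δ) ≤ |K - d₁| * δ := by
      refine mul_le_mul_of_nonneg_left ?_ (abs_nonneg _)
      nlinarith [hδ0]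
    have h1' : (K - d₁) * ((1-α) * δ + α) = (K - d₁) * ((1-α) * δ) + α * (K - d₁) := by ring
    linarith [h1, h2, h3, h1']
  have e4 : G (-α) * mB ≥ G (-α) - |G (-α)| * δ := by
    have h1 : G (-α) * mA ≤ |G (-α)| * mA := mul_le_mul_of_nonneg_right (le_abs_self _) hmA0
    have h2 : |G (-α)| * mA ≤ |G (-α)| * δ := mul_le_mul_of_nonneg_left hmA_le (abs_nonneg _)
    have h3 : G (-α) * mB = G (-α) - G (-α) * mA := by rw [hmB_eq]; ring
    linarith
  have e5 : -((1-α) * K * mB) ≥ -((1-α)*K) - |K| * δ := by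
    have h1 : -(|K|) * mA ≤ K * mA := mul_le_mul_of_nonneg_right (neg_abs_le _) hmA0
    have h2 : |K| * mA ≤ |K| * δ := mul_le_mul_of_nonneg_left hmA_le (abs_nonneg _)
    have h6 : (1-α) * (K * mA) ≥ (1-α) * (-(|K| * δ)) :=
      mul_le_mul_of_nonneg_left (by linarith) (by linarith)
    have h7 : (1-α) * (-(|K| * δ)) ≥ -(|K| * δ) := by
      nlinarith [mul_nonneg (mul_nonneg hα0.le (abs_nonneg K)) hδ0]
    have h8 : -((1-α) * K * mB) = -((1-α)*K) + (1-α) * (K * mA) := by rw [hmB_eq]; ring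
    linarith
  refine le_trans ?_ hmain
  have expand : c₁ * mA + d₁ * (hA - mA) + G u * mB
      ≥ c₁ * mA + d₁ * (1 - hB) - d₁ * mA + G (-α) * mB + (K * hB - (1-α) * K * mB) := by
    have h4 : d₁ * (hA - mA) = d₁ * (1 - hB) - d₁ * mA := by rw [hhA_eq]; ring
    have h5 : K * (hB - (1-α) * mB) = K * hB - (1-α) * K * mB := by ring
    linarith [hGu, h4, h5]
  linarith [e1, e2, e3, e4, e5, expand]

set_option maxHeartbeats 1000000 in
/-- the asymptotic breakdown point of the MDE at the model `p(θ*)` is at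
least `1/2`: under (a)–(d), for any contamination level `α ∈ (0,1/2)` and any choice of
global minimizers `θ_n` of `ρ((1−α)p(θ*) + α q_n, ·)`, the sequence `(|θ_n|)` does not
tend to infinity. -/
theorem stmt_14
    (Θ : Set ℝ) (p : ℝ → ℕ → ℝ) (G : ℝ → ℝ) (θstar : ℝ) (qn : ℕ → ℕ → ℝ)
    (hp : ∀ θ ∈ Θ, IsDistrib (p θ)) (hppos : ∀ θ ∈ Θ, ∀ k, 0 < p θ k)
    (hG3 : ContDiffOn ℝ 3 G (Set.Ici (-1)))
    (hGconv : StrictConvexOn ℝ (Set.Ici (-1)) G) (hG0 : G 0 = 0)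
    (hθstar : θstar ∈ Θ) (hqn : ∀ n, IsDistrib (qn n))
    -- (a)
    (ha : Tendsto (fun n => ∑' k, min (p θstar k) (qn n k)) atTop (𝓝 0))
    -- (b) uniformly over `{θ ∈ Θ : |θ| ≤ c}` for every `c`
    (hb : ∀ c > (0:ℝ), ∀ ε > (0:ℝ), ∀ᶠ n in atTop,
      ∀ θ ∈ Θ, |θ| ≤ c → ∑' k, min (p θ k) (qn n k) < ε)
    -- (c)
    (hc : ∀ θseq : ℕ → ℝ, (∀ n, θseq n ∈ Θ) →
      Tendsto (fun n => |θseq n|) atTop atTop →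
      Tendsto (fun n => ∑' k, min (p θstar k) (p (θseq n) k)) atTop (𝓝 0))
    -- (d): `G(−1)` is finite (automatic for real-valued `G`) and `lim_{t→∞} G(t)/t`
    -- exists and is finite
    (hd : ∃ l : ℝ, Tendsto (fun t => G t / t) atTop (𝓝 l)) :
    ∀ α : ℝ, 0 < α → α < 1 / 2 →
      ∀ θn : ℕ → ℝ,
        (∀ n, θn n ∈ Θ ∧ ∀ t ∈ Θ,
          disparity G p (fun k => (1 - α) * p θstar k + α * qn n k) (θn n) ≤
          disparity G p (fun k => (1 - α) * p θstar k + α * qn n k) t) →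
        ¬ Tendsto (fun n => |θn n|) atTop atTop := by
  intro α hα0 hα2 θn hmin hdiv
  obtain ⟨L, hL⟩ := hd
  have hα1 : α < 1 := by linarith
  have hG : ConvexOn ℝ (Set.Ici (-1:ℝ)) G := hGconv.convexOn
  have hGdiff : DifferentiableOn ℝ G (Set.Ici (-1:ℝ)) := hG3.differentiableOn (by norm_num)
  have hGle : ∀ t, (0:ℝ) ≤ t → G t ≤ L * t := fun t ht => le_linear_of_tendsto hG hG0 hL ht
  -- the global |G| bound for summability
  set d₀ : ℝ := derivWithin G (Set.Ici (-1:ℝ)) 0 with hd₀def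
  have htan0 : ∀ t, -1 ≤ t → G 0 + d₀ * (t - 0) ≤ G t := fun t ht =>
    tangent_le hG (by norm_num) ((hGdiff 0 (by norm_num)).hasDerivWithinAt) ht
  have hBound : ∀ t, -1 ≤ t → |G t| ≤ (2*|G (-1)| + |d₀| + |L|) + (|L| + |d₀|) * (t+1) := by
    intro t ht
    rw [abs_le]
    constructor
    · have h1 := htan0 t ht
      rw [hG0] at h1
      have h2 : -(|d₀| * (t+2)) ≤ d₀ * t := by
        rcases le_or_gt 0 t with h | h
        · have := mul_le_mul_of_nonneg_right (neg_abs_le d₀) h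
          nlinarith [abs_nonneg d₀]
        · have habs : |d₀ * t| ≤ |d₀| := by
            rw [abs_mul]
            have : |t| ≤ 1 := by rw [abs_le]; constructor <;> linarith
            nlinarith [abs_nonneg d₀, abs_nonneg t]
          have := neg_abs_le (d₀ * t)
          nlinarith [abs_nonneg d₀]
      have h3 : (0:ℝ) ≤ |L| * (t+1) := mul_nonneg (abs_nonneg _) (by linarith)
      have h4 : (0:ℝ) ≤ |G (-1)| := abs_nonneg _
      linarith [h1, h2, h3, h4, abs_nonneg L, abs_nonneg d₀]
    · rcases le_or_gt t 0 with h | h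
      · have h1 := chord_upper hG (le_refl (-1:ℝ)) (by norm_num : (-1:ℝ) < 0) ht h
        rw [hG0] at h1
        have h2 : (0 - G (-1)) / (0 - (-1)) = -G (-1) := by norm_num
        rw [h2] at h1
        have h3 : -G (-1) * (t - -1) ≤ |G (-1)| * 1 := by
          have ha1 : -G (-1) ≤ |G (-1)| := neg_le_abs _
          have ha2 : (0:ℝ) ≤ t - -1 := by linarith
          have ha3 : t - -1 ≤ 1 := by linarith
          have hb := mul_le_mul_of_nonneg_right ha1 ha2
          have hcc := mul_le_mul_of_nonneg_left ha3 (abs_nonneg (G (-1)))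
          linarith [hb, hcc]
        have h4 : (0:ℝ) ≤ |L| * (t+1) := mul_nonneg (abs_nonneg _) (by linarith)
        have h5 : (0:ℝ) ≤ |d₀| * (t+1) := mul_nonneg (abs_nonneg _) (by linarith)
        linarith [h1, h3, h4, h5, le_abs_self (G (-1)), abs_nonneg d₀, abs_nonneg L,
          abs_nonneg (G (-1))]
      · have h1 := hGle t h.le
        have h2 : L * t ≤ |L| * t := mul_le_mul_of_nonneg_right (le_abs_self _) h.le
        have h5 : (0:ℝ) ≤ |d₀| * (t+1) := mul_nonneg (abs_nonneg _) (by linarith)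
        nlinarith [abs_nonneg (G (-1)), abs_nonneg d₀, abs_nonneg L]
  -- the chord slope K on [-α, 0]
  set K : ℝ := (G 0 - G (-α)) / α with hKdef
  have hKeq : (G 0 - G (-α)) / (0 - -α) = K := by rw [hKdef]; norm_num
  have hchordUp : ∀ t, -α ≤ t → t ≤ 0 → G t ≤ G (-α) + K * (t + α) := by
    intro t h1 h2
    have h3 := chord_upper hG (by linarith : (-1:ℝ) ≤ -α) (by linarith : -α < 0) h1 h2
    rw [hKeq] at h3
    nlinarith [h3]
  have hchordLow : ∀ u, -1 ≤ u → u ≤ -α → G (-α) + K * (u + α) ≤ G u := by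
    intro u h1 h2
    have h3 := chord_lower hG (by linarith : -α < (0:ℝ)) (by norm_num) h1 h2
    rw [hKeq] at h3
    nlinarith [h3]
  -- strict convexity: K < G 1 ≤ L
  have hKG1 : K < G 1 := by
    have hmem1 : (-α) ∈ Set.Ici (-1:ℝ) := by simp; linarith
    have hmem2 : (1:ℝ) ∈ Set.Ici (-1:ℝ) := by norm_num
    have hne : (-α) ≠ (1:ℝ) := by intro hcon; nlinarith [hcon]
    have hsc := hGconv.2 hmem1 hmem2 hne
      (show (0:ℝ) < 1/(1+α) by positivity) (show (0:ℝ) < α/(1+α) by positivity)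
      (by field_simp)
    have harg : (1/(1+α)) • (-α) + (α/(1+α)) • (1:ℝ) = 0 := by
      simp only [smul_eq_mul]
      field_simp
      ring
    rw [harg, hG0] at hsc
    simp only [smul_eq_mul] at hsc
    have h4 : 0 < G (-α) + α * G 1 := by
      have h1α : (0:ℝ) < 1 + α := by linarith
      have := mul_pos h1α hsc
      have heq : (1+α) * (1/(1+α) * G (-α) + α/(1+α) * G 1) = G (-α) + α * G 1 := by
        field_simp
      linarith [this, heq]
    rw [hKdef, hG0, div_lt_iff₀ hα0]
    linarith
  have hG1L : G 1 ≤ L := by have := hGle 1 (by norm_num); linarith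
  have hLK : K < L := lt_of_lt_of_le hKG1 hG1L
  set κ : ℝ := (1-2*α)*(L-K)/2 with hκdef
  have hκ0 : 0 < κ := by rw [hκdef]; have h1 : 0 < 1 - 2*α := by linarith
                         have h2 : 0 < L - K := by linarith
                         positivity
  -- choose the far tangent point
  have hcomp : Tendsto (fun s : ℝ => (G (2*s) - G s)/s) atTop (𝓝 L) := by
    have h2 : Tendsto (fun s : ℝ => G (2*s) / (2*s)) atTop (𝓝 L) := by
      have hmul : Tendsto (fun s : ℝ => 2*s) atTop atTop := by
        apply Tendsto.const_mul_atTop (by norm_num : (0:ℝ) < 2) tendsto_id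
      exact hL.comp hmul
    have h3 : Tendsto (fun s : ℝ => 2*(G (2*s)/(2*s)) - G s / s) atTop (𝓝 (2*L - L)) :=
      (h2.const_mul 2).sub hL
    have h4 : (2*L - L) = L := by ring
    rw [h4] at h3
    refine h3.congr' ?_
    filter_upwards [eventually_ge_atTop (1:ℝ)] with s hs
    have hs0 : s ≠ 0 := by intro hcon; rw [hcon] at hs; norm_num at hs
    field_simp
  have hev := (hcomp.eventually (eventually_gt_nhds (show L - κ < L by linarith))).and
    (eventually_ge_atTop (1:ℝ))
  obtain ⟨s, hs2, hs1⟩ := hev.exists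
  have hspos : (0:ℝ) < s := by linarith
  set d₁ : ℝ := derivWithin G (Set.Ici (-1:ℝ)) (2*s) with hd₁def
  have htan1' : ∀ t, -1 ≤ t → G (2*s) + d₁ * (t - 2*s) ≤ G t := fun t ht =>
    tangent_le hG (by linarith) ((hGdiff (2*s) (by simp; linarith)).hasDerivWithinAt) ht
  have hd₁ : L - κ ≤ d₁ := by
    have h1 := htan1' s (by linarith)
    rw [lt_div_iff₀ hspos] at hs2
    nlinarith [h1, hs2]
  set c₁ : ℝ := G (2*s) - d₁ * (2*s) with hc₁def
  have htan1 : ∀ t, -1 ≤ t → c₁ + d₁ * t ≤ G t := by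
    intro t ht
    have h1 := htan1' t ht
    have h2 : G (2*s) + d₁ * (t - 2*s) = c₁ + d₁ * t := by rw [hc₁def]; ring
    linarith [h2 ▸ h1]
  have hKd₁ : K ≤ d₁ := by
    have h1 : (1-2*α)*(L-K) ≤ 1*(L-K) :=
      mul_le_mul_of_nonneg_right (by linarith) (by linarith)
    rw [hκdef] at hd₁
    linarith
  -- constants
  set Cup : ℝ := |G (-α)| + |K| * α + 2 * |L| * α with hCup
  set Clow : ℝ := |c₁| + |d₁| + |K - d₁| + |G (-α)| + |K| with hClow
  -- quantities going to zero
  have hδtend : Tendsto (fun n => ∑' k, min (p θstar k) (p (θn n) k)) atTop (𝓝 0) :=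
    hc θn (fun n => (hmin n).1) hdiv
  have hbound_pos : (0:ℝ) < (1 - 2*α)/(2*(1-α)) := by
    apply div_pos <;> nlinarith
  have hev1 : ∀ᶠ n in atTop, ∑' k, min (p θstar k) (p (θn n) k) ≤ (1 - 2*α)/(2*(1-α)) :=
    hδtend.eventually (eventually_le_nhds hbound_pos)
  have hT : Tendsto (fun n => Clow * (∑' k, min (p θstar k) (p (θn n) k))
      + Cup * (∑' k, min (p θstar k) (qn n k))) atTop (𝓝 0) := by
    have := (hδtend.const_mul Clow).add (ha.const_mul Cup)
    simpa using this
  have hev2 : ∀ᶠ n in atTop, Clow * (∑' k, min (p θstar k) (p (θn n) k))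
      + Cup * (∑' k, min (p θstar k) (qn n k)) < κ := hT.eventually (eventually_lt_nhds hκ0)
  obtain ⟨n, hn1, hn2⟩ := (hev1.and hev2).exists
  -- data at index n
  obtain ⟨hps0', hps1⟩ := hp θstar hθstar
  have hpspos := hppos θstar hθstar
  obtain ⟨hq0, hq1⟩ := hqn n
  obtain ⟨hm0', hm1⟩ := hp (θn n) (hmin n).1
  have hmpos := hppos (θn n) (hmin n).1
  -- summability at both parameters
  have hh0 : ∀ k, 0 ≤ (1 - α) * p θstar k + α * qn n k := by
    intro k; have := hps0' k; have := hq0 k; nlinarith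
  have hh1 : HasSum (fun k => (1 - α) * p θstar k + α * qn n k) 1 := by
    have h1 := (hps1.mul_left (1 - α)).add (hq1.mul_left α)
    have e : (1 - α) * 1 + α * 1 = (1:ℝ) := by ring
    rw [e] at h1; exact h1
  have hsum_star : Summable (fun k =>
      G (((1 - α) * p θstar k + α * qn n k) / p θstar k - 1) * p θstar k) :=
    summable_disparity hBound hh0 hpspos hh1.summable hps1.summable
  have hsum_m : Summable (fun k =>
      G (((1 - α) * p θstar k + α * qn n k) / p (θn n) k - 1) * p (θn n) k) :=
    summable_disparity hBound hh0 hmpos hh1.summable hm1.summable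
  -- the two bounds and minimality
  have hup := upper_bound hα0 hGle hchordUp hpspos hps1 hq0 hq1 hsum_star
  have hlow := lower_bound hα0 hα2 hG hGdiff htan1 hchordLow hKd₁ hps0' hps1 hq0 hq1
    hmpos hm1 hn1 hsum_m
  rw [← hCup] at hup
  rw [← hClow] at hlow
  have hminim := (hmin n).2 θstar hθstar
  simp only [disparity] at hminim
  have hminim' : (∑' k, G (((1 - α) * p θstar k + α * qn n k) / p (θn n) k - 1) * p (θn n) k)
      ≤ ∑' k, G (((1 - α) * p θstar k + α * qn n k) / p θstar k - 1) * p θstar k := hminim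
  -- the gap
  have hgap : α * L + κ ≤ (1-α) * d₁ - (1-2*α) * K := by
    have h1 : (1-α) * (L - κ) ≤ (1-α) * d₁ :=
      mul_le_mul_of_nonneg_left hd₁ (by linarith)
    have h2 : (1-2*α)*(L-K) = 2*κ := by rw [hκdef]; ring
    nlinarith [h1, h2, hκ0, hα0]
  have hstep1 : G (-α) + (1 - α) * d₁ - (1 - 2 * α) * K
      ≤ G (-α) + α * L + Cup * ∑' (k : ℕ), p θstar k ⊓ qn n k
        + Clow * ∑' (k : ℕ), p θstar k ⊓ p (θn n) k := by
    have t1 := hlow.trans hminim'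
    have t2 := t1.trans hup
    linarith [t2]
  linarith [hstep1, hn2, hgap]
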